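/- BPE is Ω(n)-far from optimal for compressed length: for every t > 2, consider the string s = (∏_{i=1}^t x_i a a y_i) · (∏_{i=1}^t |_i x_i a) · (∏_{i=1}^t |'_i a y_i) over an alphabet with symbol a, distinct symbols x_1,…,x_t, y_1,…,y_t, and 2t distinct separator symbols; then |s| = 10t, and with k = 8t − 1 merge rounds, an optimal full merge sequence compresses s to a string of length 1, while every run of BPE (which necessarily merges the pair aa first) produces a compressed string of length at least t + 2. -/

import Mathlib

variable {α : Type*} [DecidableEq α]

/-- Full greedy left-to-right replacement of the pair `ab` by `c`. -/
def replace (a b c : α) : List α → List α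
  | [] => []
  | [x] => [x]
  | x :: y :: rest =>
    if x = a ∧ y = b then c :: replace a b c rest
    else x :: replace a b c (y :: rest)

/-- Replacement of every occurrence of the symbol `c` by the pair `ab`. -/
def expand (a b c : α) : List α → List α
  | [] => []
  | x :: rest => if x = c then a :: b :: expand a b c rest else x :: expand a b c rest

/-- `t` is obtained from `s` by one partial replacement rule (replacing some
non-overlapping occurrences of a pair `ab` by a symbol `c`, invertibly). -/
def PartialStep (s t : List α) : Prop := ∃ a b c : α, expand a b c t = s

/-- `t` is obtained from `s` by one full merge of a pair `ab` into a fresh symbol `c`. -/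
def FullStep (s t : List α) : Prop := ∃ a b c : α, c ∉ s ∧ t = replace a b c s

/-- A greedy (BPE) step: a full merge minimizing the resulting length. -/
def GreedyStep (s t : List α) : Prop :=
  FullStep s t ∧ ∀ u : List α, FullStep s u → t.length ≤ u.length

/-- `t` is obtained from `s` by a partial merge sequence of length `k`. -/
def PartialReach : ℕ → List α → List α → Prop
  | 0, s, t => t = s
  | k+1, s, t => ∃ u, PartialStep s u ∧ PartialReach k u t

/-- `t` is obtained from `s` by a full merge sequence of length `k`. -/
def FullReach : ℕ → List α → List α → Prop
  | 0, s, t => t = s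
  | k+1, s, t => ∃ u, FullStep s u ∧ FullReach k u t

/-- `t` is obtained from `s` by a run of BPE with `k` greedy merge rounds. -/
def GreedyReach : ℕ → List α → List α → Prop
  | 0, s, t => t = s
  | k+1, s, t => ∃ u, GreedyStep s u ∧ GreedyReach k u t

/-- Optimal utility of partial merge sequences of length `k` (the OPE optimum). -/
noncomputable def OPT (s : List α) (k : ℕ) : ℕ :=
  sSup {u : ℕ | ∃ t : List α, PartialReach k s t ∧ u = s.length - t.length}

/-- Optimal utility of full merge sequences of length `k` (the OMS optimum). -/
noncomputable def OPTm (s : List α) (k : ℕ) : ℕ :=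
  sSup {u : ℕ | ∃ t : List α, FullReach k s t ∧ u = s.length - t.length}

/-- A pair packing: non-overlapping indices at which a common pair occurs in `s`
(0-based indices). -/
def IsPairPacking (s : List α) (P : Finset ℕ) : Prop :=
  (∀ i ∈ P, i + 1 < s.length) ∧
  (∀ i ∈ P, ∀ j ∈ P, i ≠ j → 2 ≤ Nat.dist i j) ∧
  ∃ a b : α, ∀ i ∈ P, s[i]? = some a ∧ s[i+1]? = some b

/-- A `k`-packing: a disjoint union of `k` pair packings. -/
def IsKPacking (s : List α) (k : ℕ) (P : Fin k → Finset ℕ) : Prop :=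
  (∀ i, IsPairPacking s (P i)) ∧ ∀ i j, i ≠ j → Disjoint (P i) (P j)

/-- `Pk s k`: maximum size of a `k`-packing of `s`. -/
noncomputable def Pk (s : List α) (k : ℕ) : ℕ :=
  sSup {n : ℕ | ∃ P : Fin k → Finset ℕ, IsKPacking s k P ∧ n = ∑ i, (P i).card}

/-- Number of (possibly overlapping) occurrences of the pair `ab` in `s`. -/
def freq (s : List α) (a b : α) : ℕ :=
  ((Finset.range s.length).filter (fun i => s[i]? = some a ∧ s[i+1]? = some b)).card

/-- `Fk s k`: total number of occurrences of the `k` most frequent pairs in `s`. -/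
noncomputable def Fk (s : List α) (k : ℕ) : ℕ :=
  sSup {n : ℕ | ∃ Q : Finset (α × α), Q.card ≤ k ∧ n = ∑ p ∈ Q, freq s p.1 p.2}

/-- The string `(∏ᵢ xᵢ a a yᵢ)(∏ᵢ |ᵢ xᵢ a)(∏ᵢ |'ᵢ a yᵢ)` over ℕ, with `a = 0`,
`xᵢ = 1 + i`, `yᵢ = 1 + t + i`, and separators `1 + 2t + i`, `1 + 3t + i`. -/
def sLB (t : ℕ) : List ℕ :=
  (List.range t).flatMap (fun i => [1 + i, 0, 0, 1 + t + i]) ++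
  (List.range t).flatMap (fun i => [1 + 2 * t + i, 1 + i, 0]) ++
  (List.range t).flatMap (fun i => [1 + 3 * t + i, 0, 1 + t + i])


section Lemmas
variable {α : Type*} [DecidableEq α] {a b c p q : α}

def pairCount (p q : α) : List α → ℕ
  | x :: y :: rest => (if x = p ∧ y = q then 1 else 0) + pairCount p q (y :: rest)
  | _ => 0

@[simp] lemma pairCount_nil : pairCount p q ([] : List α) = 0 := rfl
@[simp] lemma pairCount_single (x : α) : pairCount p q [x] = 0 := rfl
lemma pairCount_cons_cons (x y : α) (l : List α) :
    pairCount p q (x :: y :: l) = (if x = p ∧ y = q then 1 else 0) + pairCount p q (y :: l) := rfl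

lemma pairCount_cons (z : α) (v : List α) :
    pairCount p q (z :: v) = (if z = p ∧ v.head? = some q then 1 else 0) + pairCount p q v := by
  cases v with
  | nil => simp
  | cons y rest => simp [pairCount_cons_cons]

lemma pairCount_append (l₁ l₂ : List α) :
    pairCount p q (l₁ ++ l₂) = pairCount p q l₁ + pairCount p q l₂ +
      (if l₁.getLast? = some p ∧ l₂.head? = some q then 1 else 0) := by
  induction l₁ with
  | nil => simp
  | cons x l₁ ih =>
    cases l₁ with
    | nil =>
      simp only [List.nil_append, List.singleton_append, pairCount_cons x l₂]
      simp [List.getLast?_singleton]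
      omega
    | cons y l₁' =>
      have h1 : (x :: y :: l₁') ++ l₂ = x :: ((y :: l₁') ++ l₂) := rfl
      rw [h1, pairCount_cons, ih, pairCount_cons x (y :: l₁')]
      have h2 : ((y :: l₁') ++ l₂).head? = some y := rfl
      rw [h2]
      have h3 : (x :: y :: l₁').getLast? = (y :: l₁').getLast? := by
        simp [List.getLast?_cons_cons]
      rw [h3]
      simp only [List.head?_cons]
      simp only [Option.some.injEq]; omega

lemma pairCount_le_count_fst (l : List α) : pairCount p q l ≤ l.count p := by
  induction l with
  | nil => simp
  | cons x l ih =>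
    have hc : (x :: l).count p = l.count p + (if x = p then 1 else 0) := by
      rw [List.count_cons]; simp
    rw [pairCount_cons, hc]
    by_cases h : x = p ∧ l.head? = some q
    · rw [if_pos h, if_pos h.1]; omega
    · rw [if_neg h]
      by_cases h2 : x = p
      · rw [if_pos h2]; omega
      · rw [if_neg h2]; omega

lemma pairCount_cons_le_count_snd (l : List α) : ∀ x : α, pairCount p q (x :: l) ≤ l.count q := by
  induction l with
  | nil => simp
  | cons y l ih =>
    intro x
    have hc : (y :: l).count q = l.count q + (if y = q then 1 else 0) := by
      rw [List.count_cons]; simp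
    rw [pairCount_cons_cons, hc]
    have hy := ih y
    by_cases h : x = p ∧ y = q
    · rw [if_pos h, if_pos h.2]; omega
    · rw [if_neg h]
      by_cases h2 : y = q
      · rw [if_pos h2]; omega
      · rw [if_neg h2]; omega

lemma pairCount_le_count_snd (l : List α) : pairCount p q l ≤ l.count q := by
  cases l with
  | nil => simp
  | cons x l =>
    have h1 := pairCount_cons_le_count_snd (p := p) (q := q) l x
    have hc : (x :: l).count q = l.count q + (if x = q then 1 else 0) := by
      rw [List.count_cons]; simp
    by_cases h2 : x = q
    · rw [hc, if_pos h2]; omega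
    · rw [hc, if_neg h2]; omega

end Lemmas

section RLemmas
variable {α : Type*} [DecidableEq α] {a b c p q : α} {l l₁ l₂ : List α}

@[simp] lemma replace_nil : replace a b c ([] : List α) = [] := rfl
@[simp] lemma replace_single (x : α) : replace a b c [x] = [x] := rfl
lemma replace_cons_cons (x y : α) (rest : List α) :
    replace a b c (x :: y :: rest) =
      if x = a ∧ y = b then c :: replace a b c rest
      else x :: replace a b c (y :: rest) := rfl

lemma length_replace_le (l : List α) : (replace a b c l).length ≤ l.length := by
  induction l using replace.induct a b with
  | case1 => simp
  | case2 x => simp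
  | case3 x y rest h ih => rw [replace_cons_cons, if_pos h]; simp; omega
  | case4 x y rest h ih => rw [replace_cons_cons, if_neg h]; simp at ih ⊢; omega

lemma length_replace_ge (l : List α) :
    l.length ≤ (replace a b c l).length + pairCount a b l := by
  induction l using replace.induct a b with
  | case1 => simp
  | case2 x => simp
  | case3 x y rest h ih =>
    rw [replace_cons_cons, if_pos h, pairCount_cons_cons, if_pos h]
    have hmono : pairCount a b rest ≤ pairCount a b (y :: rest) := by
      rw [pairCount_cons]; omega
    simp only [List.length_cons]
    omega
  | case4 x y rest h ih =>
    rw [replace_cons_cons, if_neg h, pairCount_cons_cons, if_neg h]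
    simp only [List.length_cons] at ih ⊢
    omega

lemma replace_ne_nil (h : l ≠ []) : replace a b c l ≠ [] := by
  induction l using replace.induct a b with
  | case1 => simp at h
  | case2 x => simp
  | case3 x y rest h' ih => rw [replace_cons_cons, if_pos h']; simp
  | case4 x y rest h' ih => rw [replace_cons_cons, if_neg h']; simp

lemma replace_append_getLast (l₂ : List α) (h : l₁.getLast? ≠ some a) :
    replace a b c (l₁ ++ l₂) = replace a b c l₁ ++ replace a b c l₂ := by
  induction l₁ using replace.induct a b with
  | case1 => simp
  | case2 x =>
    have hx : x ≠ a := by simpa using h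
    cases l₂ with
    | nil => simp
    | cons y l₂' =>
      rw [List.singleton_append, replace_cons_cons, if_neg (by tauto)]
      simp
  | case3 x y rest h' ih =>
    rw [List.cons_append, List.cons_append, replace_cons_cons, if_pos h',
      replace_cons_cons, if_pos h']
    cases rest with
    | nil => simp
    | cons z rest' =>
      have : (z :: rest').getLast? ≠ some a := by
        rwa [List.getLast?_cons_cons, List.getLast?_cons_cons] at h
      rw [ih this]; simp
  | case4 x y rest h' ih =>
    rw [List.cons_append, List.cons_append, replace_cons_cons, if_neg h',
      replace_cons_cons, if_neg h']
    have : (y :: rest).getLast? ≠ some a := by rwa [List.getLast?_cons_cons] at h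
    rw [← List.cons_append, ih this]; simp

lemma replace_append_head? (l₂ : List α) (h : l₂.head? ≠ some b) :
    replace a b c (l₁ ++ l₂) = replace a b c l₁ ++ replace a b c l₂ := by
  induction l₁ using replace.induct a b with
  | case1 => simp
  | case2 x =>
    cases l₂ with
    | nil => simp
    | cons y l₂' =>
      have hy : y ≠ b := by simpa using h
      rw [List.singleton_append, replace_cons_cons, if_neg (by tauto)]
      simp
  | case3 x y rest h' ih =>
    rw [List.cons_append, List.cons_append, replace_cons_cons, if_pos h',
      replace_cons_cons, if_pos h', ih]
    simp
  | case4 x y rest h' ih =>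
    rw [List.cons_append, List.cons_append, replace_cons_cons, if_neg h',
      replace_cons_cons, if_neg h', ← List.cons_append, ih]
    simp

lemma replace_of_fst_not_mem (h : a ∉ l) : replace a b c l = l := by
  induction l using replace.induct a b with
  | case1 => simp
  | case2 x => simp
  | case3 x y rest h' ih => exact absurd h'.1.symm (by simp at h; tauto)
  | case4 x y rest h' ih =>
    rw [replace_cons_cons, if_neg h', ih (by simp at h ⊢; tauto)]

lemma replace_of_snd_not_mem (h : b ∉ l) : replace a b c l = l := by
  induction l using replace.induct a b with
  | case1 => simp
  | case2 x => simp
  | case3 x y rest h' ih => exact absurd h'.2.symm (by simp at h; tauto)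
  | case4 x y rest h' ih =>
    rw [replace_cons_cons, if_neg h', ih (by simp at h ⊢; tauto)]

lemma replace_structure (l : List α) :
    replace a b c l = l ∨
      ∃ u v, l = u ++ a :: b :: v ∧ replace a b c l = u ++ c :: replace a b c v := by
  induction l using replace.induct a b with
  | case1 => left; rfl
  | case2 x => left; rfl
  | case3 x y rest h' ih =>
    right
    refine ⟨[], rest, by simp [h'.1, h'.2], ?_⟩
    rw [replace_cons_cons, if_pos h']; simp
  | case4 x y rest h' ih =>
    rcases ih with h1 | ⟨u, v, hl, hr⟩
    · left; rw [replace_cons_cons, if_neg h', h1]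
    · right
      refine ⟨x :: u, v, by rw [List.cons_append, ← hl], ?_⟩
      rw [replace_cons_cons, if_neg h', hr]; simp

end RLemmas

section KLemmas
variable {α : Type*} [DecidableEq α] {a b c p q : α} {l l₁ l₂ : List α}

def Distinct (l : List α) : Prop := ∀ p q : α, pairCount p q l ≤ 1

lemma replace_of_pairCount_zero (h : pairCount a b l = 0) : replace a b c l = l := by
  rcases replace_structure (a := a) (b := b) (c := c) l with h1 | ⟨u, v, hl, _⟩
  · exact h1
  · exfalso
    rw [hl, pairCount_append, pairCount_cons_cons, if_pos ⟨rfl, rfl⟩] at h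
    omega

lemma distinct_replace (hD : Distinct l) (hc : c ∉ l) :
    Distinct (replace a b c l) ∧ l.length ≤ (replace a b c l).length + 1 := by
  have hlen : l.length ≤ (replace a b c l).length + 1 := by
    have h1 := length_replace_ge (a := a) (b := b) (c := c) l
    have h2 := hD a b
    omega
  refine ⟨?_, hlen⟩
  rcases replace_structure (a := a) (b := b) (c := c) l with h1 | ⟨u, v, hl, hr⟩
  · rwa [h1]
  · -- pairCount a b v = 0, so replace v = v
    have hpc : pairCount a b l ≤ 1 := hD a b
    have hsplit : pairCount a b l = pairCount a b u + pairCount a b (a :: b :: v) +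
        (if u.getLast? = some a ∧ (a :: b :: v).head? = some b then 1 else 0) := by
      rw [hl, pairCount_append]
    rw [pairCount_cons_cons, if_pos ⟨rfl, rfl⟩] at hsplit
    have hbv : pairCount a b (b :: v) = 0 := by omega
    have hv : pairCount a b v = 0 := by
      rw [pairCount_cons] at hbv; omega
    rw [replace_of_pairCount_zero hv] at hr
    rw [hr]
    have hcu : c ∉ u := fun h => hc (by rw [hl]; exact List.mem_append_left _ h)
    have hcv : c ∉ v := fun h => hc (by
      rw [hl]; exact List.mem_append_right _ (by simp [h]))
    intro p q
    by_cases hp : c = p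
    · calc pairCount p q (u ++ c :: v) ≤ (u ++ c :: v).count p := pairCount_le_count_fst _
      _ ≤ 1 := by
          subst hp
          rw [List.count_append, List.count_cons]
          rw [List.count_eq_zero.2 hcu, List.count_eq_zero.2 hcv]
          simp
    · by_cases hq : c = q
      · calc pairCount p q (u ++ c :: v) ≤ (u ++ c :: v).count q := pairCount_le_count_snd _
        _ ≤ 1 := by
            subst hq
            rw [List.count_append, List.count_cons]
            rw [List.count_eq_zero.2 hcu, List.count_eq_zero.2 hcv]
            simp
      · have h1 : pairCount p q (u ++ c :: v) = pairCount p q u + pairCount p q v := by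
          rw [pairCount_append, pairCount_cons]
          have : ¬ ((c :: v).head? = some q) := by simp; tauto
          rw [if_neg (by tauto), if_neg (by simp; tauto)]
          omega
        have h2 : pairCount p q u + pairCount p q v ≤ pairCount p q l := by
          rw [hl, pairCount_append, pairCount_cons_cons, pairCount_cons]
          omega
        have := hD p q
        omega

lemma greedyReach_length :
    ∀ (k : ℕ) (v u : List α), Distinct v → GreedyReach k v u → v.length ≤ u.length + k := by
  intro k
  induction k with
  | zero => intro v u _ h; rw [h]; omega
  | succ k ih =>
    intro v u hD h
    obtain ⟨w, hstep, hreach⟩ := h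
    obtain ⟨a, b, c, hc, hw⟩ := hstep.1
    subst hw
    obtain ⟨hD', hlen⟩ := distinct_replace (a := a) (b := b) hD hc
    have := ih _ u hD' hreach
    omega

end KLemmas

section Reach

lemma mem_le_foldr_max (l : List ℕ) : ∀ x ∈ l, x ≤ l.foldr max 0 := by
  induction l with
  | nil => simp
  | cons y l ih =>
    intro x hx
    rcases List.mem_cons.1 hx with h | h
    · subst h; simp [List.foldr_cons]
    · have := ih x h
      simp only [List.foldr_cons]
      omega

lemma exists_fresh (l : List ℕ) : (l.foldr max 0) + 1 ∉ l := by
  intro h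
  have := mem_le_foldr_max l _ h
  omega

lemma fullReach_trans {m n : ℕ} {s u v : List ℕ} (h1 : FullReach m s u)
    (h2 : FullReach n u v) : FullReach (m + n) s v := by
  induction m generalizing s with
  | zero =>
    rw [show (0 + n = n) by omega]
    exact h1 ▸ h2
  | succ m ih =>
    obtain ⟨w, hs, hr⟩ := h1
    rw [show (m + 1 + n = m + n + 1) by omega]
    exact ⟨w, hs, ih hr⟩

lemma reach_to_one : ∀ (k : ℕ) (s : List ℕ), s ≠ [] → s.length ≤ k + 1 →
    ∃ u, FullReach k s u ∧ u.length = 1 := by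
  intro k
  induction k with
  | zero =>
    intro s hne hlen
    refine ⟨s, rfl, ?_⟩
    have : 0 < s.length := List.length_pos_iff.2 hne
    omega
  | succ k ih =>
    intro s hne hlen
    by_cases hsmall : s.length ≤ k + 1
    · -- identity step with a fresh symbol
      set c := (s.foldr max 0) + 1 with hc
      have hfresh : c ∉ s := exists_fresh s
      obtain ⟨u, hr, hu⟩ := ih s hne hsmall
      exact ⟨u, ⟨s, ⟨c, c, c, hfresh, (replace_of_fst_not_mem hfresh).symm⟩, hr⟩, hu⟩
    · match s, hne with
      | x :: y :: rest, _ =>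
        set c := ((x :: y :: rest).foldr max 0) + 1 with hc
        have hfresh : c ∉ x :: y :: rest := exists_fresh _
        set s' := replace x y c (x :: y :: rest) with hs'
        have hs'eq : s' = c :: replace x y c rest := by
          rw [hs', replace_cons_cons, if_pos ⟨rfl, rfl⟩]
        have hlen' : s'.length ≤ k + 1 := by
          have := length_replace_le (a := x) (b := y) (c := c) rest
          simp only [hs'eq, List.length_cons] at *
          omega
        obtain ⟨u, hr, hu⟩ := ih s' (by rw [hs'eq]; simp) hlen'
        exact ⟨u, ⟨s', ⟨x, y, c, hfresh, hs'⟩, hr⟩, hu⟩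
      | [x], _ =>
        exact absurd (by simp only [List.length_singleton]; omega) hsmall

end Reach

section FlatMap
variable {α : Type*} [DecidableEq α] {a b c p q : α} {l l₁ l₂ : List α}

@[simp] lemma pc_pair (u v : α) :
    pairCount p q [u, v] = (if u = p ∧ v = q then 1 else 0) := by
  rw [pairCount_cons_cons]; simp

@[simp] lemma pc_triple (u v w : α) :
    pairCount p q [u, v, w] =
      (if u = p ∧ v = q then 1 else 0) + (if v = p ∧ w = q then 1 else 0) := by
  rw [pairCount_cons_cons, pairCount_cons_cons]; simp

@[simp] lemma pc_quad (u v w x : α) :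
    pairCount p q [u, v, w, x] =
      (if u = p ∧ v = q then 1 else 0) + (if v = p ∧ w = q then 1 else 0) +
        (if w = p ∧ x = q then 1 else 0) := by
  rw [pairCount_cons_cons, pairCount_cons_cons, pairCount_cons_cons]; simp; omega

lemma head?_flatMap_mem {β : Type*} {f : β → List α} {l : List β} {y : α}
    (h : (l.flatMap f).head? = some y) : ∃ x ∈ l, (f x).head? = some y := by
  induction l with
  | nil => simp at h
  | cons x xs ih =>
    rw [List.flatMap_cons, List.head?_append] at h
    cases hfx : (f x).head? with
    | some z =>
      rw [hfx] at h
      simp only [Option.some_or, Option.some.injEq] at h  -- h : ... = some y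
      exact ⟨x, by simp, by rw [hfx]; exact congrArg some (by
        cases h; rfl)⟩
    | none =>
      rw [hfx] at h
      simp only [Option.none_or] at h
      obtain ⟨x', hx', hfx'⟩ := ih h
      exact ⟨x', by simp [hx'], hfx'⟩

lemma getLast?_flatMap_mem {β : Type*} {f : β → List α} {l : List β} {y : α}
    (h : (l.flatMap f).getLast? = some y) : ∃ x ∈ l, (f x).getLast? = some y := by
  induction l with
  | nil => simp at h
  | cons x xs ih =>
    rw [List.flatMap_cons, List.getLast?_append] at h
    cases hfx : (xs.flatMap f).getLast? with
    | some z =>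
      rw [hfx] at h
      simp only [Option.some_or, Option.some.injEq] at h
      obtain ⟨x', hx', hfx'⟩ := ih (by rw [hfx, h])
      exact ⟨x', by simp [hx'], hfx'⟩
    | none =>
      rw [hfx] at h
      simp only [Option.none_or] at h
      exact ⟨x, by simp, h⟩

lemma replace_flatMap_getLast {β : Type*} {f : β → List α} {l : List β}
    (h : ∀ x ∈ l, (f x).getLast? ≠ some a) :
    replace a b c (l.flatMap f) = l.flatMap (fun x => replace a b c (f x)) := by
  induction l with
  | nil => simp
  | cons x xs ih =>
    rw [List.flatMap_cons, List.flatMap_cons,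
      replace_append_getLast _ (h x (by simp)), ih (fun x' hx' => h x' (by simp [hx']))]

lemma replace_flatMap_head {β : Type*} {f : β → List α} {l : List β}
    (h : ∀ x ∈ l, (f x).head? ≠ some b) :
    replace a b c (l.flatMap f) = l.flatMap (fun x => replace a b c (f x)) := by
  induction l with
  | nil => simp
  | cons x xs ih =>
    rw [List.flatMap_cons, List.flatMap_cons, replace_append_head?]
    · rw [ih (fun x' hx' => h x' (by simp [hx']))]
    · intro hcontra
      obtain ⟨x', hx', hfx'⟩ := head?_flatMap_mem hcontra
      exact h x' (by simp [hx']) hfx'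

end FlatMap

section Sums

lemma sum_map_range (f : ℕ → ℕ) : ∀ n, ((List.range n).map f).sum = ∑ i ∈ Finset.range n, f i := by
  intro n
  induction n with
  | zero => simp
  | succ n ih => rw [List.range_succ, Finset.sum_range_succ, List.map_append, List.sum_append, ih]; simp

lemma sum_ind {C : ℕ → Prop} [DecidablePred C] (t k : ℕ) (hk : ∀ i, C i → i = k) :
    (∑ i ∈ Finset.range t, if C i then 1 else 0) = if k < t ∧ C k then 1 else 0 := by
  by_cases h : k < t ∧ C k
  · rw [if_pos h, Finset.sum_eq_single_of_mem k (Finset.mem_range.2 h.1)]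
    · rw [if_pos h.2]
    · intro i _ hik; rw [if_neg (fun hC => hik (hk i hC))]
  · rw [if_neg h]
    apply Finset.sum_eq_zero
    intro i hi
    rw [if_neg]
    intro hC
    have hik := hk i hC
    subst hik
    exact h ⟨Finset.mem_range.1 hi, hC⟩

lemma getLast?_flatMap_range {α : Type*} (f : ℕ → List α) (hne : ∀ i, f i ≠ []) (n : ℕ)
    (hn : 0 < n) : ((List.range n).flatMap f).getLast? = (f (n - 1)).getLast? := by
  obtain ⟨m, rfl⟩ : ∃ m, n = m + 1 := ⟨n - 1, by omega⟩
  rw [List.range_succ, List.flatMap_append, List.getLast?_append]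
  simp only [List.flatMap_cons, List.flatMap_nil, List.append_nil, Nat.add_sub_cancel]
  cases hfm : (f m).getLast? with
  | some z => simp
  | none => exact absurd (List.getLast?_eq_none_iff.1 hfm) (hne m)

lemma head?_flatMap_range {α : Type*} (f : ℕ → List α) (hne : ∀ i, f i ≠ []) (n : ℕ)
    (hn : 0 < n) : ((List.range n).flatMap f).head? = (f 0).head? := by
  obtain ⟨m, rfl⟩ : ∃ m, n = m + 1 := ⟨n - 1, by omega⟩
  rw [List.range_succ_eq_map, List.flatMap_cons, List.head?_append]
  cases hf0 : (f 0).head? with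
  | some z => simp
  | none => exact absurd (List.head?_eq_none_iff.1 hf0) (hne 0)

lemma pc_flatMap_range {p q : ℕ} (f : ℕ → List ℕ) (hne : ∀ i, f i ≠ []) (n : ℕ) :
    pairCount p q ((List.range n).flatMap f) =
      (∑ i ∈ Finset.range n, pairCount p q (f i)) +
      (∑ i ∈ Finset.range n,
        if 0 < i ∧ (f (i - 1)).getLast? = some p ∧ (f i).head? = some q then 1 else 0) := by
  induction n with
  | zero => simp
  | succ n ih =>
    rw [List.range_succ, List.flatMap_append, pairCount_append, ih,
      Finset.sum_range_succ, Finset.sum_range_succ]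
    simp only [List.flatMap_cons, List.flatMap_nil, List.append_nil]
    rcases Nat.eq_zero_or_pos n with hn | hn
    · subst hn
      simp
    · rw [getLast?_flatMap_range f hne n hn]
      have h0 : (if 0 < n ∧ (f (n - 1)).getLast? = some p ∧ (f n).head? = some q then 1 else 0)
          = (if (f (n - 1)).getLast? = some p ∧ (f n).head? = some q then 1 else 0) := by
        rw [if_congr (and_iff_right hn) rfl rfl]
      omega

end Sums

section SLB

/-- the string after BPE's forced first merge `aa → c` -/
def Dstr (t c : ℕ) : List ℕ :=
  (List.range t).flatMap (fun i => [1 + i, c, 1 + t + i]) ++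
  ((List.range t).flatMap (fun i => [1 + 2 * t + i, 1 + i, 0]) ++
  (List.range t).flatMap (fun i => [1 + 3 * t + i, 0, 1 + t + i]))

lemma flatMap_congr' {l : List ℕ} {f g : ℕ → List ℕ} (h : ∀ x ∈ l, f x = g x) :
    l.flatMap f = l.flatMap g := by
  induction l with
  | nil => simp
  | cons x xs ih =>
    rw [List.flatMap_cons, List.flatMap_cons, h x (by simp), ih (fun y hy => h y (by simp [hy]))]

lemma length_flatMap_const {f : ℕ → List ℕ} {m : ℕ} (h : ∀ i, (f i).length = m) (n : ℕ) :
    ((List.range n).flatMap f).length = m * n := by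
  induction n with
  | zero => simp
  | succ n ih =>
    rw [List.range_succ, List.flatMap_append, List.length_append, ih]
    simp [h n]; ring

lemma length_sLB (t : ℕ) : (sLB t).length = 10 * t := by
  have hA := length_flatMap_const (f := fun i => [1 + i, 0, 0, 1 + t + i]) (m := 4)
    (fun i => rfl) t
  have hB := length_flatMap_const (f := fun i => [1 + 2 * t + i, 1 + i, 0]) (m := 3)
    (fun i => rfl) t
  have hC := length_flatMap_const (f := fun i => [1 + 3 * t + i, 0, 1 + t + i]) (m := 3)
    (fun i => rfl) t
  unfold sLB
  rw [List.length_append, List.length_append, hA, hB, hC]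
  ring

lemma length_Dstr (t c : ℕ) : (Dstr t c).length = 9 * t := by
  have hA := length_flatMap_const (f := fun i => [1 + i, c, 1 + t + i]) (m := 3)
    (fun i => rfl) t
  have hB := length_flatMap_const (f := fun i => [1 + 2 * t + i, 1 + i, 0]) (m := 3)
    (fun i => rfl) t
  have hC := length_flatMap_const (f := fun i => [1 + 3 * t + i, 0, 1 + t + i]) (m := 3)
    (fun i => rfl) t
  unfold Dstr
  rw [List.length_append, List.length_append, hA, hB, hC]
  ring

lemma mem_sLB_le {t z : ℕ} (h : z ∈ sLB t) : z ≤ 4 * t := by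
  unfold sLB at h
  rcases List.mem_append.1 h with h | h
  · rcases List.mem_append.1 h with h | h <;>
    · obtain ⟨i, hi, hz⟩ := List.mem_flatMap.1 h
      rw [List.mem_range] at hi
      simp at hz
      omega
  · obtain ⟨i, hi, hz⟩ := List.mem_flatMap.1 h
    rw [List.mem_range] at hi
    simp at hz
    omega

lemma mem_sLB {t z : ℕ} (ht : 0 < t) (hz : z ≤ 4 * t) : z ∈ sLB t := by
  unfold sLB
  by_cases h1 : z ≤ t
  · refine List.mem_append_left _ (List.mem_append_left _ (List.mem_flatMap.2 ?_))
    by_cases h0 : z = 0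
    · exact ⟨0, List.mem_range.2 ht, by simp [h0]⟩
    · exact ⟨z - 1, List.mem_range.2 (by omega), by simp; omega⟩
  · by_cases h2 : z ≤ 2 * t
    · exact List.mem_append_left _ (List.mem_append_left _ (List.mem_flatMap.2
        ⟨z - t - 1, List.mem_range.2 (by omega), by simp; omega⟩))
    · by_cases h3 : z ≤ 3 * t
      · exact List.mem_append_left _ (List.mem_append_right _ (List.mem_flatMap.2
          ⟨z - 2*t - 1, List.mem_range.2 (by omega), by simp; omega⟩))
      · exact List.mem_append_right _ (List.mem_flatMap.2
          ⟨z - 3*t - 1, List.mem_range.2 (by omega), by simp; omega⟩)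

lemma repA (t c i : ℕ) : replace 0 0 c [1 + i, 0, 0, 1 + t + i] = [1 + i, c, 1 + t + i] := by
  rw [replace_cons_cons, if_neg (by omega), replace_cons_cons, if_pos ⟨rfl, rfl⟩, replace_single]

lemma repB (t c i : ℕ) :
    replace 0 0 c [1 + 2 * t + i, 1 + i, 0] = [1 + 2 * t + i, 1 + i, 0] := by
  rw [replace_cons_cons, if_neg (by omega), replace_cons_cons, if_neg (by omega), replace_single]

lemma repC (t c i : ℕ) :
    replace 0 0 c [1 + 3 * t + i, 0, 1 + t + i] = [1 + 3 * t + i, 0, 1 + t + i] := by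
  rw [replace_cons_cons, if_neg (by omega), replace_cons_cons, if_neg (by omega), replace_single]

lemma replace_sLB (t c : ℕ) (ht : 0 < t) : replace 0 0 c (sLB t) = Dstr t c := by
  unfold sLB Dstr
  rw [List.append_assoc]
  rw [replace_append_getLast _ (by
    rw [getLast?_flatMap_range _ (fun i => by simp) t ht]
    simp)]
  rw [replace_append_head? _ (by
    rw [head?_flatMap_range _ (fun i => by simp) t ht]
    simp)]
  rw [replace_flatMap_getLast (fun x hx => by simp),
    replace_flatMap_head (fun x hx => by simp),
    replace_flatMap_head (fun x hx => by simp)]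
  rw [flatMap_congr' (fun x _ => repA t c x), flatMap_congr' (fun x _ => repB t c x),
    flatMap_congr' (fun x _ => repC t c x)]

end SLB

section PCbounds

lemma pc_sLB (t p q : ℕ) (ht : 0 < t) (h : ¬(p = 0 ∧ q = 0)) :
    pairCount p q (sLB t) ≤ 2 := by
  unfold sLB
  rw [List.append_assoc, pairCount_append, pairCount_append,
    pc_flatMap_range _ (fun i => by simp) t,
    pc_flatMap_range _ (fun i => by simp) t,
    pc_flatMap_range _ (fun i => by simp) t, List.head?_append,
    getLast?_flatMap_range _ (fun i => by simp) t ht,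
    getLast?_flatMap_range _ (fun i => by simp) t ht,
    head?_flatMap_range _ (fun i => by simp) t ht,
    head?_flatMap_range _ (fun i => by simp) t ht]
  simp only [pc_quad, pc_triple, List.getLast?_cons_cons, List.getLast?_singleton,
    List.head?_cons, Option.some.injEq, Option.or_some, Finset.sum_add_distrib]
  rw [show (if (0 = p ∧ 0 = q) then (1:ℕ) else 0) = 0 from if_neg (by omega),
    Finset.sum_const_zero]
  rw [sum_ind t (p - 1) (fun i hi => by omega),
    sum_ind t (q - t - 1) (fun i hi => by omega),
    sum_ind t (q - 1) (fun i hi => by omega),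
    sum_ind t (p - 2 * t - 1) (fun i hi => by omega),
    sum_ind t (q - 2 * t - 1) (fun i hi => by omega),
    sum_ind t (p - 3 * t - 1) (fun i hi => by omega),
    sum_ind t (q - 3 * t - 1) (fun i hi => by omega)]
  split_ifs <;> omega

set_option maxHeartbeats 2000000 in
lemma distinct_Dstr (t c : ℕ) (ht : 0 < t) (hc : 4 * t < c) : Distinct (Dstr t c) := by
  intro p q
  unfold Dstr
  rw [pairCount_append, pairCount_append,
    pc_flatMap_range _ (fun i => by simp) t,
    pc_flatMap_range _ (fun i => by simp) t,
    pc_flatMap_range _ (fun i => by simp) t, List.head?_append,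
    getLast?_flatMap_range _ (fun i => by simp) t ht,
    getLast?_flatMap_range _ (fun i => by simp) t ht,
    head?_flatMap_range _ (fun i => by simp) t ht,
    head?_flatMap_range _ (fun i => by simp) t ht]
  simp only [pc_quad, pc_triple, List.getLast?_cons_cons, List.getLast?_singleton,
    List.head?_cons, Option.some.injEq, Option.or_some, Finset.sum_add_distrib]
  rw [sum_ind t (p - 1) (fun i hi => by omega),
    sum_ind t (q - t - 1) (fun i hi => by omega),
    sum_ind t (q - 1) (fun i hi => by omega),
    sum_ind t (p - 2 * t - 1) (fun i hi => by omega),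
    sum_ind t (p - 1) (fun i hi => by omega),
    sum_ind t (q - 2 * t - 1) (fun i hi => by omega),
    sum_ind t (p - 3 * t - 1) (fun i hi => by omega),
    sum_ind t (q - t - 1) (fun i hi => by omega),
    sum_ind t (q - 3 * t - 1) (fun i hi => by omega)]
  split_ifs <;> omega

end PCbounds

section Part3

lemma greedy_first {t : ℕ} (ht : 2 < t) {u : List ℕ} (h : GreedyStep (sLB t) u) :
    u.length = 9 * t ∧ Distinct u := by
  obtain ⟨⟨a, b, c, hc, hu⟩, hmin⟩ := h
  have hfresh : (4 * t + 1) ∉ sLB t := fun hmem => by have := mem_sLB_le hmem; omega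
  have hwit : FullStep (sLB t) (Dstr t (4 * t + 1)) :=
    ⟨0, 0, 4 * t + 1, hfresh, (replace_sLB t _ (by omega)).symm⟩
  have hle : u.length ≤ 9 * t := by
    have h1 := hmin _ hwit
    rw [length_Dstr] at h1
    exact h1
  have hab : a = 0 ∧ b = 0 := by
    by_contra hab
    have hpc : pairCount a b (sLB t) ≤ 2 := pc_sLB t a b (by omega) (by tauto)
    have h1 := length_replace_ge (a := a) (b := b) (c := c) (sLB t)
    have h2 := length_sLB t
    rw [hu] at hle
    omega
  obtain ⟨rfl, rfl⟩ := hab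
  rw [hu, replace_sLB t c (by omega)]
  have hc' : 4 * t < c := by
    by_contra hc'
    exact hc (mem_sLB (by omega) (by omega))
  exact ⟨length_Dstr t c, distinct_Dstr t c (by omega) hc'⟩

lemma part3 {t : ℕ} (ht : 2 < t) (u : List ℕ) (h : GreedyReach (8 * t - 1) (sLB t) u) :
    t + 2 ≤ u.length := by
  have hk : 8 * t - 1 = (8 * t - 2) + 1 := by omega
  rw [hk] at h
  obtain ⟨u₁, hstep, hreach⟩ := h
  obtain ⟨hlen, hdist⟩ := greedy_first ht hstep
  have := greedyReach_length (8 * t - 2) u₁ u hdist hreach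
  omega

end Part3

section Part2

def Sstr (t j : ℕ) : List ℕ :=
  (List.range t).flatMap
    (fun i => if i < j then [1+4*t+i, 1+5*t+i] else [1 + i, 0, 0, 1 + t + i]) ++
  ((List.range t).flatMap
    (fun i => if i < j then [1+2*t+i, 1+4*t+i] else [1 + 2 * t + i, 1 + i, 0]) ++
   (List.range t).flatMap
    (fun i => if i < j then [1+3*t+i, 1+5*t+i] else [1 + 3 * t + i, 0, 1 + t + i]))

def Tstr (t j : ℕ) : List ℕ :=
  (List.range t).flatMap
    (fun i => if i < j then [1+4*t+i, 1+5*t+i] else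
      if i = j then [1+4*t+j, 0, 1+t+j] else [1 + i, 0, 0, 1 + t + i]) ++
  ((List.range t).flatMap
    (fun i => if i ≤ j then [1+2*t+i, 1+4*t+i] else [1 + 2 * t + i, 1 + i, 0]) ++
   (List.range t).flatMap
    (fun i => if i < j then [1+3*t+i, 1+5*t+i] else [1 + 3 * t + i, 0, 1 + t + i]))

lemma Sstr_zero (t : ℕ) : Sstr t 0 = sLB t := by
  unfold Sstr sLB
  simp

lemma mem_Sstr {t j z : ℕ} (hj : j ≤ t) (h : z ∈ Sstr t j) :
    z ≤ 4 * t + j ∨ (5 * t + 1 ≤ z ∧ z ≤ 5 * t + j) := by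
  unfold Sstr at h
  rcases List.mem_append.1 h with h | h
  · obtain ⟨i, hi, hz⟩ := List.mem_flatMap.1 h
    rw [List.mem_range] at hi
    by_cases hij : i < j
    · rw [if_pos hij] at hz; simp at hz; omega
    · rw [if_neg hij] at hz; simp at hz; omega
  · rcases List.mem_append.1 h with h | h <;>
    · obtain ⟨i, hi, hz⟩ := List.mem_flatMap.1 h
      rw [List.mem_range] at hi
      by_cases hij : i < j
      · rw [if_pos hij] at hz; simp at hz; omega
      · rw [if_neg hij] at hz; simp at hz; omega

lemma mem_Tstr {t j z : ℕ} (hj : j < t) (h : z ∈ Tstr t j) :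
    z ≤ 4 * t + j + 1 ∨ (5 * t + 1 ≤ z ∧ z ≤ 5 * t + j) := by
  unfold Tstr at h
  rcases List.mem_append.1 h with h | h
  · obtain ⟨i, hi, hz⟩ := List.mem_flatMap.1 h
    rw [List.mem_range] at hi
    by_cases hij : i < j
    · rw [if_pos hij] at hz; simp at hz; omega
    · rw [if_neg hij] at hz
      by_cases hij2 : i = j
      · rw [if_pos hij2] at hz; simp at hz; omega
      · rw [if_neg hij2] at hz; simp at hz; omega
  · rcases List.mem_append.1 h with h | h
    · obtain ⟨i, hi, hz⟩ := List.mem_flatMap.1 h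
      rw [List.mem_range] at hi
      by_cases hij : i ≤ j
      · rw [if_pos hij] at hz; simp at hz; omega
      · rw [if_neg hij] at hz; simp at hz; omega
    · obtain ⟨i, hi, hz⟩ := List.mem_flatMap.1 h
      rw [List.mem_range] at hi
      by_cases hij : i < j
      · rw [if_pos hij] at hz; simp at hz; omega
      · rw [if_neg hij] at hz; simp at hz; omega

end Part2

section Part2b

lemma claim1 {t j : ℕ} (hj : j < t) :
    replace (1 + j) 0 (1 + 4 * t + j) (Sstr t j) = Tstr t j := by
  unfold Sstr Tstr
  rw [replace_append_getLast _ (by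
      rw [getLast?_flatMap_range _ (fun i => by split <;> simp) t (by omega)]
      rw [if_neg (by omega)]
      simp <;> omega)]
  rw [replace_append_getLast _ (by
      rw [getLast?_flatMap_range _ (fun i => by split <;> simp) t (by omega)]
      split <;> simp <;> omega)]
  rw [replace_flatMap_getLast (fun x hx => by split <;> simp <;> omega)]
  rw [replace_flatMap_getLast (fun x hx => by split <;> simp <;> omega)]
  rw [replace_of_fst_not_mem (fun hm => by
      obtain ⟨i, hi, hz⟩ := List.mem_flatMap.1 hm
      rw [List.mem_range] at hi
      by_cases hij : i < j
      · rw [if_pos hij] at hz; simp at hz; omega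
      · rw [if_neg hij] at hz; simp at hz; omega)]
  congr 1
  · refine flatMap_congr' (fun x hx => ?_)
    rw [List.mem_range] at hx
    by_cases h1 : x < j
    · rw [if_pos h1, if_pos h1, replace_cons_cons, if_neg (by omega), replace_single]
    · rw [if_neg h1, if_neg h1]
      by_cases h2 : x = j
      · subst h2
        rw [if_pos rfl, replace_cons_cons, if_pos ⟨rfl, rfl⟩, replace_cons_cons,
          if_neg (by omega), replace_single]
      · rw [if_neg h2, replace_cons_cons, if_neg (by omega), replace_cons_cons,
          if_neg (by omega), replace_cons_cons, if_neg (by omega), replace_single]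
  congr 1
  refine flatMap_congr' (fun x hx => ?_)
  rw [List.mem_range] at hx
  by_cases h1 : x < j
  · rw [if_pos h1, if_pos (by omega : x ≤ j), replace_cons_cons, if_neg (by omega),
      replace_single]
  · by_cases h2 : x = j
    · subst h2
      rw [if_neg h1, if_pos (le_refl x), replace_cons_cons, if_neg (by omega),
        replace_cons_cons, if_pos ⟨rfl, rfl⟩, replace_nil]
    · rw [if_neg h1, if_neg (by omega : ¬ x ≤ j), replace_cons_cons, if_neg (by omega),
        replace_cons_cons, if_neg (by omega), replace_single]

lemma claim2 {t j : ℕ} (hj : j < t) :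
    replace 0 (1 + t + j) (1 + 5 * t + j) (Tstr t j) = Sstr t (j + 1) := by
  unfold Sstr Tstr
  rw [replace_append_getLast _ (by
      rw [getLast?_flatMap_range _ (fun i => by split <;> (try split) <;> simp) t
        (by omega)]
      split <;> (try split) <;> simp <;> omega)]
  rw [replace_append_head? _ (by
      rw [head?_flatMap_range _ (fun i => by split <;> simp) t (by omega)]
      split <;> simp <;> omega)]
  rw [replace_flatMap_getLast (fun x hx => by
      split <;> (try split) <;> simp <;> omega)]
  rw [replace_of_snd_not_mem (fun hm => by
      obtain ⟨i, hi, hz⟩ := List.mem_flatMap.1 hm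
      rw [List.mem_range] at hi
      by_cases hij : i ≤ j
      · rw [if_pos hij] at hz; simp at hz; omega
      · rw [if_neg hij] at hz; simp at hz; omega)]
  rw [replace_flatMap_head (fun x hx => by split <;> simp <;> omega)]
  congr 1
  · refine flatMap_congr' (fun x hx => ?_)
    rw [List.mem_range] at hx
    by_cases h1 : x < j
    · rw [if_pos h1, if_pos (by omega : x < j + 1), replace_cons_cons, if_neg (by omega),
        replace_single]
    · by_cases h2 : x = j
      · subst h2
        rw [if_neg h1, if_pos rfl, if_pos (by omega : x < x + 1), replace_cons_cons,
          if_neg (by omega), replace_cons_cons, if_pos ⟨rfl, rfl⟩, replace_nil]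
      · rw [if_neg h1, if_neg h2, if_neg (by omega : ¬ x < j + 1), replace_cons_cons,
          if_neg (by omega), replace_cons_cons, if_neg (by omega), replace_cons_cons,
          if_neg (by omega), replace_single]
  congr 1
  · refine flatMap_congr' (fun x hx => ?_)
    by_cases h1 : x ≤ j
    · rw [if_pos h1, if_pos (by omega : x < j + 1)]
    · rw [if_neg h1, if_neg (by omega : ¬ x < j + 1)]
  · refine flatMap_congr' (fun x hx => ?_)
    rw [List.mem_range] at hx
    by_cases h1 : x < j
    · rw [if_pos h1, if_pos (by omega : x < j + 1), replace_cons_cons, if_neg (by omega),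
        replace_single]
    · by_cases h2 : x = j
      · subst h2
        rw [if_neg h1, if_pos (by omega : x < x + 1), replace_cons_cons, if_neg (by omega),
          replace_cons_cons, if_pos ⟨rfl, rfl⟩, replace_nil]
      · rw [if_neg h1, if_neg (by omega : ¬ x < j + 1), replace_cons_cons, if_neg (by omega),
          replace_cons_cons, if_neg (by omega), replace_single]

lemma reach_Sstr (t : ℕ) : ∀ j, j ≤ t → FullReach (2 * j) (sLB t) (Sstr t j) := by
  intro j
  induction j with
  | zero => intro _; exact Sstr_zero t
  | succ j ih =>
    intro hj
    have hj' : j < t := by omega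
    have fresh1 : (1 + 4 * t + j) ∉ Sstr t j := fun hm => by
      rcases mem_Sstr (by omega) hm with h | h <;> omega
    have fresh2 : (1 + 5 * t + j) ∉ Tstr t j := fun hm => by
      rcases mem_Tstr hj' hm with h | h <;> omega
    have hstep : FullReach 2 (Sstr t j) (Sstr t (j + 1)) :=
      ⟨Tstr t j, ⟨1 + j, 0, 1 + 4 * t + j, fresh1, (claim1 hj').symm⟩,
        Sstr t (j + 1), ⟨0, 1 + t + j, 1 + 5 * t + j, fresh2, (claim2 hj').symm⟩, rfl⟩
    have := fullReach_trans (ih (by omega)) hstep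
    rwa [show 2 * j + 2 = 2 * (j + 1) by omega] at this

lemma length_Sstr_top (t : ℕ) : (Sstr t t).length = 6 * t := by
  unfold Sstr
  rw [flatMap_congr' (fun x hx => if_pos (List.mem_range.1 hx)),
    flatMap_congr' (fun x hx => if_pos (List.mem_range.1 hx)),
    flatMap_congr' (fun x hx => if_pos (List.mem_range.1 hx))]
  have hA := length_flatMap_const (f := fun i => [1+4*t+i, 1+5*t+i]) (m := 2) (fun i => rfl) t
  have hB := length_flatMap_const (f := fun i => [1+2*t+i, 1+4*t+i]) (m := 2) (fun i => rfl) t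
  have hC := length_flatMap_const (f := fun i => [1+3*t+i, 1+5*t+i]) (m := 2) (fun i => rfl) t
  rw [List.length_append, List.length_append, hA, hB, hC]
  ring

lemma part2 {t : ℕ} (ht : 2 < t) :
    ∃ u : List ℕ, FullReach (8 * t - 1) (sLB t) u ∧ u.length = 1 := by
  have h1 : FullReach (2 * t) (sLB t) (Sstr t t) := reach_Sstr t t le_rfl
  have h2 : (Sstr t t).length = 6 * t := length_Sstr_top t
  have hne : Sstr t t ≠ [] := by
    intro hnil
    rw [hnil] at h2
    simp at h2
    omega
  obtain ⟨u, hr, hu⟩ := reach_to_one (6 * t - 1) (Sstr t t) hne (by omega)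
  have h3 := fullReach_trans h1 hr
  rw [show 2 * t + (6 * t - 1) = 8 * t - 1 by omega] at h3
  exact ⟨u, h3, hu⟩

end Part2b

/-- BPE is `Ω(n)`-far from optimal for compressed length: `|s| = 10t`;
with `k = 8t − 1` rounds some full merge sequence compresses `s` to length `1`,
while every run of BPE leaves a string of length at least `t + 2`. -/
theorem stmt13 (t : ℕ) (ht : 2 < t) :
    (sLB t).length = 10 * t ∧
    (∃ u : List ℕ, FullReach (8 * t - 1) (sLB t) u ∧ u.length = 1) ∧
    (∀ u : List ℕ, GreedyReach (8 * t - 1) (sLB t) u → t + 2 ≤ u.length) := by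
  exact ⟨length_sLB t, part2 ht, fun u h => part3 ht u h⟩
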